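/- For nonzero rational numbers a and b, the ℚ-algebras ℚ[X,Y]/(X² + aY², XY) and ℚ[X,Y]/(X² + bY², XY) are isomorphic as ℚ-algebras if and only if there exists a nonzero rational c with a = c²·b (i.e., if and only if a and b represent the same class in ℚ*/(ℚ*)²). -/

import Mathlib

open MvPolynomial

/-- A concrete model of `ℚ[X,Y]/(X² + bY², XY)` on coordinates `(1, x, y, y²)`. -/
structure Mod4 (b : ℚ) where
  c0 : ℚ
  c1 : ℚ
  c2 : ℚ
  c3 : ℚ

namespace Mod4

variable {b : ℚ}

@[ext] theorem ext' {z w : Mod4 b} (h0 : z.c0 = w.c0) (h1 : z.c1 = w.c1)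
    (h2 : z.c2 = w.c2) (h3 : z.c3 = w.c3) : z = w := by
  cases z; cases w; simp_all

instance : Zero (Mod4 b) := ⟨⟨0, 0, 0, 0⟩⟩
instance : One (Mod4 b) := ⟨⟨1, 0, 0, 0⟩⟩
instance : Add (Mod4 b) := ⟨fun z w => ⟨z.c0 + w.c0, z.c1 + w.c1, z.c2 + w.c2, z.c3 + w.c3⟩⟩
instance : Neg (Mod4 b) := ⟨fun z => ⟨-z.c0, -z.c1, -z.c2, -z.c3⟩⟩
instance : Mul (Mod4 b) :=
  ⟨fun z w => ⟨z.c0 * w.c0, z.c0 * w.c1 + z.c1 * w.c0, z.c0 * w.c2 + z.c2 * w.c0,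
    z.c0 * w.c3 + z.c3 * w.c0 + z.c2 * w.c2 - b * (z.c1 * w.c1)⟩⟩

@[simp] theorem zero_c0 : (0 : Mod4 b).c0 = 0 := rfl
@[simp] theorem zero_c1 : (0 : Mod4 b).c1 = 0 := rfl
@[simp] theorem zero_c2 : (0 : Mod4 b).c2 = 0 := rfl
@[simp] theorem zero_c3 : (0 : Mod4 b).c3 = 0 := rfl
@[simp] theorem one_c0 : (1 : Mod4 b).c0 = 1 := rfl
@[simp] theorem one_c1 : (1 : Mod4 b).c1 = 0 := rfl
@[simp] theorem one_c2 : (1 : Mod4 b).c2 = 0 := rfl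
@[simp] theorem one_c3 : (1 : Mod4 b).c3 = 0 := rfl
@[simp] theorem add_c0 (z w : Mod4 b) : (z + w).c0 = z.c0 + w.c0 := rfl
@[simp] theorem add_c1 (z w : Mod4 b) : (z + w).c1 = z.c1 + w.c1 := rfl
@[simp] theorem add_c2 (z w : Mod4 b) : (z + w).c2 = z.c2 + w.c2 := rfl
@[simp] theorem add_c3 (z w : Mod4 b) : (z + w).c3 = z.c3 + w.c3 := rfl
@[simp] theorem neg_c0 (z : Mod4 b) : (-z).c0 = -z.c0 := rfl
@[simp] theorem neg_c1 (z : Mod4 b) : (-z).c1 = -z.c1 := rfl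
@[simp] theorem neg_c2 (z : Mod4 b) : (-z).c2 = -z.c2 := rfl
@[simp] theorem neg_c3 (z : Mod4 b) : (-z).c3 = -z.c3 := rfl
@[simp] theorem mul_c0 (z w : Mod4 b) : (z * w).c0 = z.c0 * w.c0 := rfl
@[simp] theorem mul_c1 (z w : Mod4 b) : (z * w).c1 = z.c0 * w.c1 + z.c1 * w.c0 := rfl
@[simp] theorem mul_c2 (z w : Mod4 b) : (z * w).c2 = z.c0 * w.c2 + z.c2 * w.c0 := rfl
@[simp] theorem mul_c3 (z w : Mod4 b) :
    (z * w).c3 = z.c0 * w.c3 + z.c3 * w.c0 + z.c2 * w.c2 - b * (z.c1 * w.c1) := rfl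

instance : CommRing (Mod4 b) where
  add_assoc := by intros; ext <;> simp <;> ring
  zero_add := by intros; ext <;> simp
  add_zero := by intros; ext <;> simp
  add_comm := by intros; ext <;> simp <;> ring
  left_distrib := by intros; ext <;> simp <;> ring
  right_distrib := by intros; ext <;> simp <;> ring
  zero_mul := by intros; ext <;> simp
  mul_zero := by intros; ext <;> simp
  mul_assoc := by intros; ext <;> simp <;> ring
  one_mul := by intros; ext <;> simp
  mul_one := by intros; ext <;> simp
  neg_add_cancel := by intros; ext <;> simp
  mul_comm := by intros; ext <;> simp <;> ring
  nsmul := nsmulRec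
  zsmul := zsmulRec

/-- Scalars embed in the first coordinate. -/
def toMod4 : ℚ →+* Mod4 b where
  toFun c := ⟨c, 0, 0, 0⟩
  map_one' := rfl
  map_mul' := by intros; ext <;> simp
  map_zero' := rfl
  map_add' := by intros; ext <;> simp

instance : Algebra ℚ (Mod4 b) := (toMod4 : ℚ →+* Mod4 b).toAlgebra

@[simp] theorem algebraMap_c0 (c : ℚ) : (algebraMap ℚ (Mod4 b) c).c0 = c := rfl
@[simp] theorem algebraMap_c1 (c : ℚ) : (algebraMap ℚ (Mod4 b) c).c1 = 0 := rfl
@[simp] theorem algebraMap_c2 (c : ℚ) : (algebraMap ℚ (Mod4 b) c).c2 = 0 := rfl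
@[simp] theorem algebraMap_c3 (c : ℚ) : (algebraMap ℚ (Mod4 b) c).c3 = 0 := rfl

@[simp] theorem pow_c0 (z : Mod4 b) (n : ℕ) : (z ^ n).c0 = z.c0 ^ n := by
  induction n with
  | zero => simp
  | succ n ih => rw [pow_succ, pow_succ, mul_c0, ih]

/-- the class of `x`. -/
def xA : Mod4 b := ⟨0, 1, 0, 0⟩
/-- the class of `y`. -/
def yA : Mod4 b := ⟨0, 0, 1, 0⟩

@[simp] theorem xA_c0 : (xA : Mod4 b).c0 = 0 := rfl
@[simp] theorem xA_c1 : (xA : Mod4 b).c1 = 1 := rfl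
@[simp] theorem xA_c2 : (xA : Mod4 b).c2 = 0 := rfl
@[simp] theorem xA_c3 : (xA : Mod4 b).c3 = 0 := rfl
@[simp] theorem yA_c0 : (yA : Mod4 b).c0 = 0 := rfl
@[simp] theorem yA_c1 : (yA : Mod4 b).c1 = 0 := rfl
@[simp] theorem yA_c2 : (yA : Mod4 b).c2 = 1 := rfl
@[simp] theorem yA_c3 : (yA : Mod4 b).c3 = 0 := rfl

end Mod4

/-- `R a = ℚ[X,Y]/(X² + aY², XY)`. -/
noncomputable abbrev stmt2R (a : ℚ) :=
  MvPolynomial (Fin 2) ℚ ⧸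
    Ideal.span ({X 0 ^ 2 + C a * X 1 ^ 2, X 0 * X 1} : Set (MvPolynomial (Fin 2) ℚ))

noncomputable abbrev stmtI (a : ℚ) : Ideal (MvPolynomial (Fin 2) ℚ) :=
  Ideal.span ({X 0 ^ 2 + C a * X 1 ^ 2, X 0 * X 1} : Set (MvPolynomial (Fin 2) ℚ))

theorem mem1 (a : ℚ) : (X 0 ^ 2 + C a * X 1 ^ 2 : MvPolynomial (Fin 2) ℚ) ∈ stmtI a :=
  Ideal.subset_span (by simp)

theorem mem2 (a : ℚ) : (X 0 * X 1 : MvPolynomial (Fin 2) ℚ) ∈ stmtI a :=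
  Ideal.subset_span (by simp)

theorem mk_C (a c : ℚ) :
    Ideal.Quotient.mk (stmtI a) (C c) = algebraMap ℚ (stmt2R a) c := by
  have := (Ideal.Quotient.mkₐ ℚ (stmtI a)).commutes c
  rw [Ideal.Quotient.mkₐ_eq_mk] at this
  rw [MvPolynomial.algebraMap_eq] at this
  exact this

/-- Evaluation of `stmt2R b` in the concrete model `Mod4 b`. -/
noncomputable def nuB (b : ℚ) : stmt2R b →ₐ[ℚ] Mod4 b :=
  Ideal.Quotient.liftₐ (stmtI b) (aeval ![Mod4.xA, Mod4.yA]) (by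
    intro p hp
    rw [Ideal.mem_span_pair] at hp
    obtain ⟨u, v, rfl⟩ := hp
    have h1 : aeval (R := ℚ) ![(Mod4.xA : Mod4 b), Mod4.yA] (X 0 ^ 2 + C b * X 1 ^ 2) = 0 := by
      have : aeval (R := ℚ) ![(Mod4.xA : Mod4 b), Mod4.yA] (X 0 ^ 2 + C b * X 1 ^ 2)
          = Mod4.xA ^ 2 + algebraMap ℚ (Mod4 b) b * Mod4.yA ^ 2 := by
        simp
      rw [this]
      ext <;> simp [pow_two]
    have h2 : aeval (R := ℚ) ![(Mod4.xA : Mod4 b), Mod4.yA] (X 0 * X 1) = 0 := by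
      have : aeval (R := ℚ) ![(Mod4.xA : Mod4 b), Mod4.yA] (X 0 * X 1)
          = Mod4.xA * Mod4.yA := by simp
      rw [this]
      ext <;> simp
    simp [map_add, map_mul, h1, h2])

@[simp] theorem nuB_mk_X0 (b : ℚ) :
    nuB b (Ideal.Quotient.mk (stmtI b) (X 0)) = Mod4.xA := by
  rw [nuB, Ideal.Quotient.liftₐ_apply]
  erw [Ideal.Quotient.lift_mk]
  simp

@[simp] theorem nuB_mk_X1 (b : ℚ) :
    nuB b (Ideal.Quotient.mk (stmtI b) (X 1)) = Mod4.yA := by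
  rw [nuB, Ideal.Quotient.liftₐ_apply]
  erw [Ideal.Quotient.lift_mk]
  simp

theorem cube_X0_mem (a : ℚ) : (X 0 : MvPolynomial (Fin 2) ℚ) ^ 3 ∈ stmtI a := by
  rw [Ideal.mem_span_pair]
  exact ⟨X 0, -C a * X 1, by ring⟩

theorem cube_X1_mem (a : ℚ) (ha : a ≠ 0) : (X 1 : MvPolynomial (Fin 2) ℚ) ^ 3 ∈ stmtI a := by
  rw [Ideal.mem_span_pair]
  refine ⟨C a⁻¹ * X 1, -(C a⁻¹) * X 0, ?_⟩
  have hC : (C a⁻¹ : MvPolynomial (Fin 2) ℚ) * C a = 1 := by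
    rw [← C_mul, inv_mul_cancel₀ ha, C_1]
  linear_combination (X 1 : MvPolynomial (Fin 2) ℚ) ^ 3 * hC

/-- The arithmetic heart of the classification. -/
theorem arith_key (a b p q s t : ℚ) (ha : a ≠ 0) (hb : b ≠ 0)
    (h1 : q * t - b * (p * s) = 0)
    (h2 : q ^ 2 - b * p ^ 2 + a * (t ^ 2 - b * s ^ 2) = 0)
    (hD : p * t - q * s ≠ 0) : ∃ c : ℚ, c ≠ 0 ∧ a = c ^ 2 * b := by
  by_cases ht : t = 0
  · subst ht
    have hs : s ≠ 0 := fun hs => hD (by rw [hs]; ring)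
    have hq : q ≠ 0 := fun hq => hD (by rw [hq]; ring)
    have hp : p = 0 := by
      have h1' : b * (p * s) = 0 := by linarith
      rcases mul_eq_zero.mp h1' with h | h
      · exact absurd h hb
      · rcases mul_eq_zero.mp h with h | h
        · exact h
        · exact absurd h hs
    rw [hp] at h2
    have hq2 : q ^ 2 = a * b * s ^ 2 := by linear_combination h2
    refine ⟨q / (b * s), div_ne_zero hq (mul_ne_zero hb hs), ?_⟩
    rw [div_pow, div_mul_eq_mul_div, eq_div_iff (pow_ne_zero 2 (mul_ne_zero hb hs))]
    linear_combination (-b) * hq2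
  · by_cases hts : t ^ 2 - b * s ^ 2 = 0
    · exfalso
      apply hD
      have key : t * (p * t - q * s) = 0 := by linear_combination (-s) * h1 + p * hts
      rcases mul_eq_zero.mp key with h | h
      · exact absurd h ht
      · exact h
    · have key : (t ^ 2 - b * s ^ 2) * (a * t ^ 2 - b * p ^ 2) = 0 := by
        linear_combination t ^ 2 * h2 - (q * t + b * p * s) * h1
      have h3 : a * t ^ 2 = b * p ^ 2 := by
        rcases mul_eq_zero.mp key with h | h
        · exact absurd h hts
        · linarith
      have hpz : p ≠ 0 := by
        intro hpz
        rw [hpz] at h3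
        have h4 : a * t ^ 2 = 0 := by linarith [h3]
        rcases mul_eq_zero.mp h4 with h | h
        · exact ha h
        · exact ht (pow_eq_zero_iff (by norm_num) |>.mp h)
      refine ⟨p / t, div_ne_zero hpz ht, ?_⟩
      rw [div_pow, div_mul_eq_mul_div, eq_div_iff (pow_ne_zero 2 ht)]
      linear_combination h3

/-- Hard direction: an algebra isomorphism forces `a/b` to be a square. -/
theorem hard_dir (a b : ℚ) (ha : a ≠ 0) (hb : b ≠ 0) (e : stmt2R a ≃ₐ[ℚ] stmt2R b) :
    ∃ c : ℚ, c ≠ 0 ∧ a = c ^ 2 * b := by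
  classical
  set ν : stmt2R b →ₐ[ℚ] Mod4 b := nuB b with hν
  set u : Mod4 b := ν (e (Ideal.Quotient.mk (stmtI a) (X 0))) with hu
  set v : Mod4 b := ν (e (Ideal.Quotient.mk (stmtI a) (X 1))) with hv
  -- cube relations give vanishing constant terms
  have hu3 : u ^ 3 = 0 := by
    have hz : Ideal.Quotient.mk (stmtI a) ((X 0 : MvPolynomial (Fin 2) ℚ) ^ 3) = 0 :=
      Ideal.Quotient.eq_zero_iff_mem.mpr (cube_X0_mem a)
    rw [hu, ← map_pow, ← map_pow, ← map_pow, hz, map_zero, map_zero]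
  have hv3 : v ^ 3 = 0 := by
    have hz : Ideal.Quotient.mk (stmtI a) ((X 1 : MvPolynomial (Fin 2) ℚ) ^ 3) = 0 :=
      Ideal.Quotient.eq_zero_iff_mem.mpr (cube_X1_mem a ha)
    rw [hv, ← map_pow, ← map_pow, ← map_pow, hz, map_zero, map_zero]
  have hu0 : u.c0 = 0 := by
    have h := congrArg Mod4.c0 hu3
    simp only [Mod4.pow_c0, Mod4.zero_c0] at h
    exact pow_eq_zero_iff (n := 3) (by norm_num) |>.mp h
  have hv0 : v.c0 = 0 := by
    have h := congrArg Mod4.c0 hv3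
    simp only [Mod4.pow_c0, Mod4.zero_c0] at h
    exact pow_eq_zero_iff (n := 3) (by norm_num) |>.mp h
  -- the two defining relations, transported
  have hrel1 : u * v = 0 := by
    have hz : Ideal.Quotient.mk (stmtI a) ((X 0 : MvPolynomial (Fin 2) ℚ) * X 1) = 0 :=
      Ideal.Quotient.eq_zero_iff_mem.mpr (mem2 a)
    rw [hu, hv, ← map_mul, ← map_mul, ← map_mul, hz, map_zero, map_zero]
  have hrel2 : u ^ 2 + algebraMap ℚ (Mod4 b) a * v ^ 2 = 0 := by
    have hz : Ideal.Quotient.mk (stmtI a) ((X 0 : MvPolynomial (Fin 2) ℚ) ^ 2 + C a * X 1 ^ 2)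
        = 0 := Ideal.Quotient.eq_zero_iff_mem.mpr (mem1 a)
    have h := congrArg (fun r => ν (e r)) hz
    simp only [map_add, map_mul, map_pow, map_zero, mk_C a a, AlgEquiv.commutes,
      AlgHom.commutes] at h
    rw [hu, hv]
    exact h
  have h1 : u.c2 * v.c2 - b * (u.c1 * v.c1) = 0 := by
    have h := congrArg Mod4.c3 hrel1
    simp only [Mod4.mul_c3, Mod4.zero_c3, hu0, hv0] at h
    linear_combination h
  have h2 : u.c2 ^ 2 - b * u.c1 ^ 2 + a * (v.c2 ^ 2 - b * v.c1 ^ 2) = 0 := by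
    have h := congrArg Mod4.c3 hrel2
    simp only [pow_two, Mod4.add_c3, Mod4.mul_c3, Mod4.zero_c3, hu0, hv0,
      Mod4.algebraMap_c0, Mod4.algebraMap_c1, Mod4.algebraMap_c2, Mod4.algebraMap_c3,
      Mod4.mul_c0, Mod4.mul_c1, Mod4.mul_c2] at h
    linear_combination h
  -- nondegeneracy
  have hD : u.c1 * v.c2 - u.c2 * v.c1 ≠ 0 := by
    intro hDeq
    obtain ⟨α, β, hαβ, hfu, hfv⟩ :
        ∃ α β : ℚ, ¬(α = 0 ∧ β = 0) ∧ α * u.c1 + β * u.c2 = 0 ∧ α * v.c1 + β * v.c2 = 0 := by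
      by_cases hst : v.c1 = 0 ∧ v.c2 = 0
      · by_cases hpq : u.c1 = 0 ∧ u.c2 = 0
        · exact ⟨1, 0, by simp, by simp [hpq.1, hpq.2], by simp [hst.1, hst.2]⟩
        · refine ⟨u.c2, -u.c1, ?_, by ring, ?_⟩
          · intro h
            exact hpq ⟨neg_eq_zero.mp h.2, h.1⟩
          · rw [hst.1, hst.2]; ring
      · refine ⟨v.c2, -v.c1, ?_, by linear_combination hDeq, by ring⟩
        intro h
        exact hst ⟨neg_eq_zero.mp h.2, h.1⟩
    have key : ∀ r : stmt2R a, α * (ν (e r)).c1 + β * (ν (e r)).c2 = 0 := by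
      intro r
      obtain ⟨P, rfl⟩ := Ideal.Quotient.mk_surjective (I := stmtI a) r
      induction P using MvPolynomial.induction_on with
      | C c =>
        rw [mk_C a c, AlgEquiv.commutes, AlgHom.commutes]
        simp
      | add f g hf hg =>
        rw [map_add, map_add, map_add]
        simp only [Mod4.add_c1, Mod4.add_c2]
        linear_combination hf + hg
      | mul_X f i hf =>
        have hFw : α * (ν (e (Ideal.Quotient.mk (stmtI a) (X i)))).c1
            + β * (ν (e (Ideal.Quotient.mk (stmtI a) (X i)))).c2 = 0 := by
          fin_cases i
          · exact hfu
          · exact hfv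
        rw [map_mul, map_mul, map_mul]
        simp only [Mod4.mul_c1, Mod4.mul_c2]
        linear_combination (ν (e (Ideal.Quotient.mk (stmtI a) f))).c0 * hFw
          + (ν (e (Ideal.Quotient.mk (stmtI a) (X i)))).c0 * hf
    have hα : α = 0 := by
      have h := key (e.symm (Ideal.Quotient.mk (stmtI b) (X 0)))
      rw [AlgEquiv.apply_symm_apply] at h
      simpa [hν] using h
    have hβ : β = 0 := by
      have h := key (e.symm (Ideal.Quotient.mk (stmtI b) (X 1)))
      rw [AlgEquiv.apply_symm_apply] at h
      simpa [hν] using h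
    exact hαβ ⟨hα, hβ⟩
  exact arith_key a b u.c1 u.c2 v.c1 v.c2 ha hb h1 h2 hD

/-- The algebra map `R a → R b` induced by `X ↦ X`, `Y ↦ dY`, when `a d² = b`. -/
noncomputable def toHom (a b d : ℚ)
    (hrel : (C a : MvPolynomial (Fin 2) ℚ) * C d ^ 2 = C b) : stmt2R a →ₐ[ℚ] stmt2R b :=
  Ideal.Quotient.liftₐ (stmtI a)
    ((Ideal.Quotient.mkₐ ℚ (stmtI b)).comp (aeval ![X 0, C d * X 1]))
    (by
      intro p hp
      rw [Ideal.mem_span_pair] at hp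
      obtain ⟨f, g, rfl⟩ := hp
      have h1 : (aeval (R := ℚ) ![(X 0 : MvPolynomial (Fin 2) ℚ), C d * X 1])
          (X 0 ^ 2 + C a * X 1 ^ 2) = X 0 ^ 2 + C b * X 1 ^ 2 := by
        simp only [map_add, map_mul, map_pow, aeval_X, aeval_C, Matrix.cons_val_zero,
          Matrix.cons_val_one, Matrix.head_cons, MvPolynomial.algebraMap_eq]
        linear_combination (X 1 : MvPolynomial (Fin 2) ℚ) ^ 2 * hrel
      have h2 : (aeval (R := ℚ) ![(X 0 : MvPolynomial (Fin 2) ℚ), C d * X 1])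
          (X 0 * X 1) = C d * (X 0 * X 1) := by
        simp only [map_mul, aeval_X, Matrix.cons_val_zero, Matrix.cons_val_one,
          Matrix.head_cons]
        ring
      have expand : (aeval (R := ℚ) ![(X 0 : MvPolynomial (Fin 2) ℚ), C d * X 1])
          (f * (X 0 ^ 2 + C a * X 1 ^ 2) + g * (X 0 * X 1))
          = (aeval (R := ℚ) ![(X 0 : MvPolynomial (Fin 2) ℚ), C d * X 1]) f
              * (X 0 ^ 2 + C b * X 1 ^ 2)
            + (aeval (R := ℚ) ![(X 0 : MvPolynomial (Fin 2) ℚ), C d * X 1]) g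
              * (C d * (X 0 * X 1)) := by
        rw [map_add, map_mul, map_mul, h1, h2]
      rw [AlgHom.comp_apply, expand, map_add, map_mul, map_mul]
      have e1 : (Ideal.Quotient.mkₐ ℚ (stmtI b)) ((X 0 : MvPolynomial (Fin 2) ℚ) ^ 2
          + C b * X 1 ^ 2) = 0 := by
        rw [Ideal.Quotient.mkₐ_eq_mk]
        exact Ideal.Quotient.eq_zero_iff_mem.mpr (mem1 b)
      have e2 : (Ideal.Quotient.mkₐ ℚ (stmtI b)) ((C d : MvPolynomial (Fin 2) ℚ)
          * (X 0 * X 1)) = 0 := by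
        rw [Ideal.Quotient.mkₐ_eq_mk]
        exact Ideal.Quotient.eq_zero_iff_mem.mpr (Ideal.mul_mem_left _ _ (mem2 b))
      rw [e1, e2]
      simp)

theorem toHom_mk (a b d : ℚ) (hrel : (C a : MvPolynomial (Fin 2) ℚ) * C d ^ 2 = C b)
    (p : MvPolynomial (Fin 2) ℚ) :
    toHom a b d hrel (Ideal.Quotient.mk (stmtI a) p)
      = Ideal.Quotient.mk (stmtI b) (aeval (R := ℚ) ![X 0, C d * X 1] p) := by
  rw [toHom, Ideal.Quotient.liftₐ_apply]
  erw [Ideal.Quotient.lift_mk]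

/-- Easy direction: if `a = c² b` then the algebras are isomorphic. -/
theorem easy_dir (a b c : ℚ) (ha : a ≠ 0) (hb : b ≠ 0) (hc : c ≠ 0) (hab : a = c ^ 2 * b) :
    Nonempty (stmt2R a ≃ₐ[ℚ] stmt2R b) := by
  have hc2 : (C a : MvPolynomial (Fin 2) ℚ) * C c⁻¹ ^ 2 = C b := by
    rw [← C_pow, ← C_mul]
    congr 1
    rw [hab]
    field_simp
  have hb2 : (C b : MvPolynomial (Fin 2) ℚ) * C c ^ 2 = C a := by
    rw [← C_pow, ← C_mul]
    congr 1
    rw [hab]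
    ring
  have hXid : ∀ i : Fin 2, (aeval (R := ℚ) ![(X 0 : MvPolynomial (Fin 2) ℚ), C c⁻¹ * X 1])
      ((aeval (R := ℚ) ![(X 0 : MvPolynomial (Fin 2) ℚ), C c * X 1]) (X i)) = X i := by
    intro i
    fin_cases i
    · simp
    · show (aeval (R := ℚ) ![(X 0 : MvPolynomial (Fin 2) ℚ), C c⁻¹ * X 1])
        ((aeval (R := ℚ) ![(X 0 : MvPolynomial (Fin 2) ℚ), C c * X 1]) (X 1)) = X 1
      simp only [aeval_X, Matrix.cons_val_one, Matrix.head_cons, map_mul, aeval_C,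
        Matrix.cons_val_zero, MvPolynomial.algebraMap_eq]
      rw [← mul_assoc, ← C_mul, mul_inv_cancel₀ hc, C_1, one_mul]
  have hXid' : ∀ i : Fin 2, (aeval (R := ℚ) ![(X 0 : MvPolynomial (Fin 2) ℚ), C c * X 1])
      ((aeval (R := ℚ) ![(X 0 : MvPolynomial (Fin 2) ℚ), C c⁻¹ * X 1]) (X i)) = X i := by
    intro i
    fin_cases i
    · simp
    · show (aeval (R := ℚ) ![(X 0 : MvPolynomial (Fin 2) ℚ), C c * X 1])
        ((aeval (R := ℚ) ![(X 0 : MvPolynomial (Fin 2) ℚ), C c⁻¹ * X 1]) (X 1)) = X 1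
      simp only [aeval_X, Matrix.cons_val_one, Matrix.head_cons, map_mul, aeval_C,
        Matrix.cons_val_zero, MvPolynomial.algebraMap_eq]
      rw [← mul_assoc, ← C_mul, inv_mul_cancel₀ hc, C_1, one_mul]
  refine ⟨AlgEquiv.ofAlgHom (toHom a b c⁻¹ hc2) (toHom b a c hb2) ?_ ?_⟩
  · apply Ideal.Quotient.algHom_ext
    apply MvPolynomial.algHom_ext
    intro i
    simp only [AlgHom.comp_apply, Ideal.Quotient.mkₐ_eq_mk, AlgHom.id_apply]
    rw [toHom_mk, toHom_mk, hXid i]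
  · apply Ideal.Quotient.algHom_ext
    apply MvPolynomial.algHom_ext
    intro i
    simp only [AlgHom.comp_apply, Ideal.Quotient.mkₐ_eq_mk, AlgHom.id_apply]
    rw [toHom_mk, toHom_mk, hXid' i]

/-- For nonzero rationals `a`, `b`, the `ℚ`-algebras `ℚ[X,Y]/(X² + aY², XY)` and
`ℚ[X,Y]/(X² + bY², XY)` are isomorphic iff `a = c² b` for some nonzero rational `c`. -/
theorem stmt_2 (a b : ℚ) (ha : a ≠ 0) (hb : b ≠ 0) :
    Nonempty (stmt2R a ≃ₐ[ℚ] stmt2R b) ↔ ∃ c : ℚ, c ≠ 0 ∧ a = c ^ 2 * b := by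
  constructor
  · rintro ⟨e⟩
    exact hard_dir a b ha hb e
  · rintro ⟨c, hc, hab⟩
    exact easy_dir a b c ha hb hc hab
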